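/- Let σ₁ < σ₂ be real numbers, let q : ℝ → ℝ, and let ψ : ℝ → ℝ be three times differentiable on (σ₁,σ₂) with ψ'(t) > 0 for all t ∈ (σ₁,σ₂). If ψ' satisfies Kummer's equation relative to q on (σ₁,σ₂), then the function v(t) = sin(ψ(t))/√(ψ'(t)) satisfies v''(t) + q(t)·v(t) = 0 for all t ∈ (σ₁,σ₂). -/

import Mathlib

open Real Set

theorem kummer_implies_sin_solution (σ₁ σ₂ : ℝ) (hσ : σ₁ < σ₂) (q ψ : ℝ → ℝ)
    (hdiff : ∀ t ∈ Ioo σ₁ σ₂, DifferentiableAt ℝ ψ t ∧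
      DifferentiableAt ℝ (deriv ψ) t ∧ DifferentiableAt ℝ (deriv (deriv ψ)) t)
    (hpos : ∀ t ∈ Ioo σ₁ σ₂, 0 < deriv ψ t)
    (hkummer : ∀ t ∈ Ioo σ₁ σ₂,
      q t - (deriv ψ t) ^ 2 - (1 / 2) * (deriv (deriv (deriv ψ)) t / deriv ψ t)
        + (3 / 4) * (deriv (deriv ψ) t / deriv ψ t) ^ 2 = 0) :
    ∀ t ∈ Ioo σ₁ σ₂,
      deriv (deriv (fun s => Real.sin (ψ s) / Real.sqrt (deriv ψ s))) t
        + q t * (Real.sin (ψ t) / Real.sqrt (deriv ψ t)) = 0 := by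
  intro t ht
  set p := deriv ψ with hp_def
  set p2 := deriv p with hp2_def
  set p3 := deriv p2 with hp3_def
  set v1 : ℝ → ℝ := fun u =>
    Real.cos (ψ u) * Real.sqrt (p u) - Real.sin (ψ u) * p2 u / (2 * p u * Real.sqrt (p u))
    with hv1_def
  -- Claim A: derivative of v on the interval
  have claimA : ∀ s ∈ Ioo σ₁ σ₂,
      HasDerivAt (fun u => Real.sin (ψ u) / Real.sqrt (p u)) (v1 s) s := by
    intro s hs
    have hps : 0 < p s := hpos s hs
    have hrs : 0 < Real.sqrt (p s) := Real.sqrt_pos.mpr hps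
    have hψd : HasDerivAt ψ (p s) s := (hdiff s hs).1.hasDerivAt
    have hpd : HasDerivAt p (p2 s) s := (hdiff s hs).2.1.hasDerivAt
    have hsin : HasDerivAt (fun u => Real.sin (ψ u)) (Real.cos (ψ s) * p s) s := by
      simpa [Function.comp_def] using (Real.hasDerivAt_sin (ψ s)).comp s hψd
    have hsqrt : HasDerivAt (fun u => Real.sqrt (p u)) (p2 s / (2 * Real.sqrt (p s))) s :=
      hpd.sqrt (ne_of_gt hps)
    have h : HasDerivAt (fun u => Real.sin (ψ u) / Real.sqrt (p u)) _ s := hsin.div hsqrt (ne_of_gt hrs)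
    convert h using 1
    have hr2 : Real.sqrt (p s) ^ 2 = p s := Real.sq_sqrt hps.le
    simp only [hv1_def]
    field_simp
    rw [hr2]
  have hmem : Ioo σ₁ σ₂ ∈ nhds t := isOpen_Ioo.mem_nhds ht
  have hEq : deriv (fun u => Real.sin (ψ u) / Real.sqrt (p u)) =ᶠ[nhds t] v1 :=
    Filter.eventuallyEq_of_mem hmem (fun s hs => (claimA s hs).deriv)
  have hderiv2 : deriv (deriv (fun u => Real.sin (ψ u) / Real.sqrt (p u))) t = deriv v1 t :=
    hEq.deriv_eq
  -- Claim C: derivative of v1 at t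
  have hpt : 0 < p t := hpos t ht
  have hrt : 0 < Real.sqrt (p t) := Real.sqrt_pos.mpr hpt
  have hψd : HasDerivAt ψ (p t) t := (hdiff t ht).1.hasDerivAt
  have hpd : HasDerivAt p (p2 t) t := (hdiff t ht).2.1.hasDerivAt
  have hp2d : HasDerivAt p2 (p3 t) t := (hdiff t ht).2.2.hasDerivAt
  have hsin : HasDerivAt (fun u => Real.sin (ψ u)) (Real.cos (ψ t) * p t) t := by
    simpa [Function.comp_def] using (Real.hasDerivAt_sin (ψ t)).comp t hψd
  have hcos : HasDerivAt (fun u => Real.cos (ψ u)) (-Real.sin (ψ t) * p t) t := by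
    simpa [mul_comm, Function.comp_def] using (Real.hasDerivAt_cos (ψ t)).comp t hψd
  have hsqrt : HasDerivAt (fun u => Real.sqrt (p u)) (p2 t / (2 * Real.sqrt (p t))) t :=
    hpd.sqrt (ne_of_gt hpt)
  have hA : HasDerivAt (fun u => Real.cos (ψ u) * Real.sqrt (p u))
      (-Real.sin (ψ t) * p t * Real.sqrt (p t)
        + Real.cos (ψ t) * (p2 t / (2 * Real.sqrt (p t)))) t := hcos.mul hsqrt
  have hN : HasDerivAt (fun u => Real.sin (ψ u) * p2 u)
      (Real.cos (ψ t) * p t * p2 t + Real.sin (ψ t) * p3 t) t := hsin.mul hp2d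
  have hg : HasDerivAt (fun u => 2 * p u * Real.sqrt (p u))
      (2 * p2 t * Real.sqrt (p t) + 2 * p t * (p2 t / (2 * Real.sqrt (p t)))) t := by
    have h1 : HasDerivAt (fun u => 2 * p u) (2 * p2 t) t := hpd.const_mul 2
    exact h1.mul hsqrt
  have hgne : 2 * p t * Real.sqrt (p t) ≠ 0 := by positivity
  have hB := hN.div hg hgne
  have hv1d : HasDerivAt v1
      ((-Real.sin (ψ t) * p t * Real.sqrt (p t)
        + Real.cos (ψ t) * (p2 t / (2 * Real.sqrt (p t))))
      - ((Real.cos (ψ t) * p t * p2 t + Real.sin (ψ t) * p3 t) * (2 * p t * Real.sqrt (p t))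
          - Real.sin (ψ t) * p2 t *
            (2 * p2 t * Real.sqrt (p t) + 2 * p t * (p2 t / (2 * Real.sqrt (p t)))))
        / (2 * p t * Real.sqrt (p t)) ^ 2) t := hA.sub hB
  rw [hp_def] at hderiv2 ⊢
  rw [show (fun s => Real.sin (ψ s) / Real.sqrt (deriv ψ s))
    = (fun u => Real.sin (ψ u) / Real.sqrt (p u)) from rfl, hderiv2, hv1d.deriv]
  have hq := hkummer t ht
  have hr2 : Real.sqrt (p t) ^ 2 = p t := Real.sq_sqrt hpt.le
  have hrne : Real.sqrt (p t) ≠ 0 := ne_of_gt hrt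
  have hpne : p t ≠ 0 := ne_of_gt hpt
  set r := Real.sqrt (p t) with hr_def
  rw [← hr2] at hq ⊢
  have h2 : -Real.sin (ψ t) * r ^ 2 * r + Real.cos (ψ t) * (p2 t / (2 * r)) -
      ((Real.cos (ψ t) * r ^ 2 * p2 t + Real.sin (ψ t) * p3 t) * (2 * r ^ 2 * r) -
          Real.sin (ψ t) * p2 t * (2 * p2 t * r + 2 * r ^ 2 * (p2 t / (2 * r)))) /
        (2 * r ^ 2 * r) ^ 2 +
      q t * (Real.sin (ψ t) / r)
      = (Real.sin (ψ t) / r) * (q t - (r ^ 2) ^ 2 - 1 / 2 * (p3 t / r ^ 2)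
          + 3 / 4 * (p2 t / r ^ 2) ^ 2) := by
    field_simp
    ring
  rw [h2, hq, mul_zero]
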